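/- Let V be a reduced cyclic word and x a single letter. If (P₁,Q₁), (P₂,Q₂) ∈ LP₂(V, c(x)) are linked pairs with γ(P₁,Q₁) = γ(P₂,Q₂), then (P₁,Q₁) = (P₂,Q₂). -/

import Mathlib

/-!
Combinatorial model of the Goldman–Turaev Lie bialgebra of curves on a surface
with boundary, following M. Chas, "Combinatorial Lie bialgebras of curves on
surfaces".

The alphabet `𝔸ₙ = {a₁,…,aₙ, ā₁,…,āₙ}` is modelled by `Letter n := Fin n × Bool`,
with the bar involution flipping the boolean.  Linear words are lists of letters;
a cyclic word is a list up to rotation (`List.IsRotated`).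
-/

open List

abbrev Letter (n : ℕ) := Fin n × Bool

namespace ChasCW

variable {n : ℕ}

/-- The bar involution `x ↦ x̄` on letters. -/
def bar (x : Letter n) : Letter n := (x.1, !x.2)

/-- The formal inverse `W̄` of a linear word `W`. -/
def wordInv (w : List (Letter n)) : List (Letter n) := (w.map bar).reverse

/-- A linear word is freely reduced if no letter is followed by its inverse. -/
def Reduced (w : List (Letter n)) : Prop := w.Chain' (fun a b => b ≠ bar a)

/-- A nonempty word all of whose cyclic rotations are freely reduced:
a representative of a reduced cyclic word. -/
def CyclicallyReduced (w : List (Letter n)) : Prop :=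
  w ≠ [] ∧ ∀ i, Reduced (w.rotate i)

/-- The type of cyclic words: lists of letters up to rotation. -/
abbrev CWord (n : ℕ) := Quotient (List.IsRotated.setoid (Letter n))

/-- The cyclic word `c(w)` determined by a linear word `w`. -/
def cw (w : List (Letter n)) : CWord n := Quotient.mk _ w

/-- A surface symbol: a reduced cyclic word containing every letter of the
alphabet exactly once. -/
def SurfaceSymbol (O : List (Letter n)) : Prop :=
  CyclicallyReduced O ∧ ∀ x : Letter n, O.count x = 1

/-- `w` embeds injectively and orientation-preservingly as a cyclic subsequence
of the cyclic word `O`. -/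
def CyclicEmbeds (w O : List (Letter n)) : Prop :=
  w.Nodup ∧ ∃ i ≤ w.length, ∃ j ≤ O.length, (w.rotate i).Sublist (O.rotate j)

open Classical in
/-- The orientation `o(w) ∈ {-1,0,1}` of a cyclic word relative to the surface
symbol `O`: `1` for an orientation-preserving embedding of rings, `-1` for an
orientation-reversing one, `0` otherwise. -/
noncomputable def orient (O w : List (Letter n)) : ℤ :=
  if CyclicEmbeds w O then 1 else if CyclicEmbeds w O.reverse then -1 else 0

/-- Case (1) of Definition 2.1: `P = p₁p₂`, `Q = q₁q₂` and
`o(c(p̄₁q̄₁p₂q₂)) ≠ 0`. -/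
def Linked1 (O : List (Letter n)) (p₁ p₂ q₁ q₂ : Letter n) : Prop :=
  Reduced [p₁, p₂] ∧ Reduced [q₁, q₂] ∧ orient O [bar p₁, bar q₁, p₂, q₂] ≠ 0

/-- Case (2) of Definition 2.1: `P = p₁Yp₂`, `Q = q₁Yq₂`, `p₁ ≠ q₁`, `p₂ ≠ q₂`,
`Y = x₁X x₂` nonempty, and `o(c(p̄₁q̄₁x₁)) = o(c(p₂q₂x̄₂))`. -/
def Linked2 (O : List (Letter n)) (p₁ p₂ q₁ q₂ x₁ x₂ : Letter n)
    (Y : List (Letter n)) : Prop :=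
  Y ≠ [] ∧ Y.head? = some x₁ ∧ Y.getLast? = some x₂ ∧
  p₁ ≠ q₁ ∧ p₂ ≠ q₂ ∧
  Reduced (p₁ :: (Y ++ [p₂])) ∧ Reduced (q₁ :: (Y ++ [q₂])) ∧
  orient O [bar p₁, bar q₁, x₁] = orient O [p₂, q₂, bar x₂]

/-- Case (3) of Definition 2.1: `P = p₁Yp₂`, `Q = q₁Ȳq₂`, `p₁ ≠ q̄₂`, `p₂ ≠ q̄₁`,
`Y = x₁X x₂` nonempty, and `o(c(q₂p̄₁x₁)) = o(c(q̄₁p₂x̄₂))`. -/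
def Linked3 (O : List (Letter n)) (p₁ p₂ q₁ q₂ x₁ x₂ : Letter n)
    (Y : List (Letter n)) : Prop :=
  Y ≠ [] ∧ Y.head? = some x₁ ∧ Y.getLast? = some x₂ ∧
  p₁ ≠ bar q₂ ∧ p₂ ≠ bar q₁ ∧
  Reduced (p₁ :: (Y ++ [p₂])) ∧ Reduced (q₁ :: (wordInv Y ++ [q₂])) ∧
  orient O [q₂, bar p₁, x₁] = orient O [bar q₁, p₂, bar x₂]

/-- `(P,Q)` is an `O`-linked pair (Definition 2.1). -/
def LinkedPair (O P Q : List (Letter n)) : Prop :=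
  (∃ p₁ p₂ q₁ q₂, P = [p₁, p₂] ∧ Q = [q₁, q₂] ∧ Linked1 O p₁ p₂ q₁ q₂) ∨
  (∃ p₁ p₂ q₁ q₂ x₁ x₂ Y, P = p₁ :: (Y ++ [p₂]) ∧ Q = q₁ :: (Y ++ [q₂]) ∧
    Linked2 O p₁ p₂ q₁ q₂ x₁ x₂ Y) ∨
  (∃ p₁ p₂ q₁ q₂ x₁ x₂ Y, P = p₁ :: (Y ++ [p₂]) ∧ Q = q₁ :: (wordInv Y ++ [q₂]) ∧
    Linked3 O p₁ p₂ q₁ q₂ x₁ x₂ Y)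

/-- The sign of a linked pair `(P,Q)`, computed from the (unique) decomposition
of `P` and `Q` prescribed by Definition 2.1. -/
noncomputable def signLP (O P Q : List (Letter n)) : ℤ :=
  match P, Q with
  | p₁ :: P', q₁ :: Q' =>
    match P'.getLast?, Q'.getLast? with
    | some p₂, some q₂ =>
      let Y := P'.dropLast
      let Z := Q'.dropLast
      if Y = [] then orient O [bar p₁, bar q₁, p₂, q₂]
      else
        match Y.head?, Y.getLast? with
        | some x₁, some _ =>
          if Z = wordInv Y then orient O [q₂, bar p₁, x₁]
          else orient O [bar p₁, bar q₁, x₁]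
        | _, _ => 0
    | _, _ => 0
  | _, _ => 0

/-- The subword of length `l` of (a large power of) the cyclic word `V`,
starting at position `i`.  This encodes occurrences of subwords of powers
of `V`. -/
def segment (V : List (Letter n)) (i l : ℕ) : List (Letter n) :=
  (((List.replicate (l + 1) V).flatten).rotate i).take l

/-- The set `LP₁(W)` of linked pairs of occurrences of subwords of `W`,
an occurrence being encoded by its starting position and its length. -/
def LP1 (O W : List (Letter n)) : Set ((ℕ × ℕ) × (ℕ × ℕ)) :=
  {e | e.1.1 < W.length ∧ e.2.1 < W.length ∧ e.1.2 ≤ W.length ∧ e.2.2 ≤ W.length ∧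
    LinkedPair O (segment W e.1.1 e.1.2) (segment W e.2.1 e.2.2)}

/-- The set `LP₂(V,W)` of linked pairs of the pair of cyclic words `(V,W)`:
pairs of occurrences of subwords of powers of `V` resp. `W` which are linked.
(The normalization `len V^{j-1} < len P ≤ len V^j` is implicit in the encoding
of an occurrence by a starting position `< len V` and a length.) -/
def LP2 (O V W : List (Letter n)) : Set ((ℕ × ℕ) × (ℕ × ℕ)) :=
  {e | e.1.1 < V.length ∧ e.2.1 < W.length ∧
    LinkedPair O (segment V e.1.1 e.1.2) (segment W e.2.1 e.2.2)}

end ChasCW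

namespace ChasCW

variable {n : ℕ}

/-- The glued cyclic word `γ(P,Q)` of a linked pair of occurrences
`e = ((i, len P), (j, len Q)) ∈ LP₂(V,W)` (Section 2.3).  In cases (1),(2) it is
`c(V₁W₁)` where `V₁`, `W₁` are the representatives of `V`, `W` cut immediately
before `p₂`, resp. `q₂`; in case (3) (detected by the middle of `Q` being the
inverse of the middle `Y` of `P`) it is `c(V₁W₁)` with `V₁` the subword of `V`
complementary to `Y` and `W₁` the subword of `W` complementary to `Ȳ`. -/
def gammaLP (V W : List (Letter n)) (e : (ℕ × ℕ) × (ℕ × ℕ)) : List (Letter n) :=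
  let i := e.1.1; let lp := e.1.2; let j := e.2.1; let lq := e.2.2
  let P := segment V i lp
  let Q := segment W j lq
  let Y := (P.drop 1).dropLast
  if 3 ≤ lp ∧ (Q.drop 1).dropLast = wordInv Y then
    segment V ((i + 1 + Y.length) % V.length)
      ((V.length - Y.length % V.length) % V.length) ++
    segment W ((j + 1 + Y.length) % W.length)
      ((W.length - Y.length % W.length) % W.length)
  else
    V.rotate ((i + lp - 1) % V.length) ++ W.rotate ((j + lq - 1) % W.length)

/-- The first cyclic word `δ₁(P,Q)` obtained by cutting `W` along the linked
pair of occurrences `e ∈ LP₁(W)`. -/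
def delta1 (W : List (Letter n)) (e : (ℕ × ℕ) × (ℕ × ℕ)) : List (Letter n) :=
  let m := W.length
  let i := e.1.1; let lp := e.1.2; let j := e.2.1; let lq := e.2.2
  let P := segment W i lp
  let Q := segment W j lq
  let Y := (P.drop 1).dropLast
  let c₁ := (i + lp - 1) % m
  let c₂ := (j + lq - 1) % m
  if 3 ≤ lp ∧ (Q.drop 1).dropLast = wordInv Y then
    (W.rotate c₁).take (((j + m - c₁) % m) + 1)
  else
    (W.rotate c₁).take ((c₂ + m - c₁) % m)

/-- The second cyclic word `δ₂(P,Q)` obtained by cutting `W` along the linked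
pair of occurrences `e ∈ LP₁(W)`. -/
def delta2 (W : List (Letter n)) (e : (ℕ × ℕ) × (ℕ × ℕ)) : List (Letter n) :=
  let m := W.length
  let i := e.1.1; let lp := e.1.2; let j := e.2.1; let lq := e.2.2
  let P := segment W i lp
  let Q := segment W j lq
  let Y := (P.drop 1).dropLast
  let c₁ := (i + lp - 1) % m
  let c₂ := (j + lq - 1) % m
  if 3 ≤ lp ∧ (Q.drop 1).dropLast = wordInv Y then
    (W.rotate c₂).take (((i + m - c₂) % m) + 1)
  else
    (W.rotate c₂).take ((c₁ + m - c₂) % m)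

open Classical in
/-- `LP₁(W)` as a finite set. -/
noncomputable def LP1F (O W : List (Letter n)) : Finset ((ℕ × ℕ) × (ℕ × ℕ)) :=
  ((Finset.range W.length ×ˢ Finset.range (W.length + 1)) ×ˢ
   (Finset.range W.length ×ˢ Finset.range (W.length + 1))).filter
    (fun e => LinkedPair O (segment W e.1.1 e.1.2) (segment W e.2.1 e.2.2))

open Classical in
/-- `LP₂(V,W)` as a finite set (subword lengths are `< len V + len W` by
Proposition 2.12). -/
noncomputable def LP2F (O V W : List (Letter n)) : Finset ((ℕ × ℕ) × (ℕ × ℕ)) :=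
  ((Finset.range V.length ×ˢ Finset.range (V.length + W.length)) ×ˢ
   (Finset.range W.length ×ˢ Finset.range (V.length + W.length))).filter
    (fun e => LinkedPair O (segment V e.1.1 e.1.2) (segment W e.2.1 e.2.2))

/-- The combinatorial Turaev cobracket
`δ(W) = ∑_{(P,Q) ∈ LP₁(W)} sign(P,Q) δ₁(P,Q) ⊗ δ₂(P,Q)`, with values in the
tensor square of the vector space with basis the cyclic words, realized as the
free vector space on pairs of cyclic words (`single (c₁, c₂) 1 = c₁ ⊗ c₂`). -/
noncomputable def cobracket (O W : List (Letter n)) :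
    (CWord n × CWord n) →₀ ℚ :=
  ∑ e ∈ LP1F O W,
    (signLP O (segment W e.1.1 e.1.2) (segment W e.2.1 e.2.2)) •
      Finsupp.single (cw (delta1 W e), cw (delta2 W e)) (1 : ℚ)

/-- The combinatorial Goldman bracket
`[V,W] = ∑_{(P,Q) ∈ LP₂(V,W)} sign(P,Q) γ(P,Q)`. -/
noncomputable def bracket (O V W : List (Letter n)) : CWord n →₀ ℚ :=
  ∑ e ∈ LP2F O V W,
    (signLP O (segment V e.1.1 e.1.2) (segment W e.2.1 e.2.2)) •
      Finsupp.single (cw (gammaLP V W e)) (1 : ℚ)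

end ChasCW

namespace ChasCW

/-! ### Auxiliary machinery for Lemma 5.1 -/

section Aux

variable {n : ℕ}

lemma bar_bar (a : Letter n) : bar (bar a) = a := by simp [bar]

lemma bar_ne_self (a : Letter n) : bar a ≠ a := by
  simp [bar, Prod.ext_iff]

lemma bar_injective : Function.Injective (bar (n := n)) := by
  intro a b h
  have := congrArg bar h
  rwa [bar_bar, bar_bar] at this

lemma wordInv_replicate (k : ℕ) (a : Letter n) :
    wordInv (List.replicate k a) = List.replicate k (bar a) := by
  simp [wordInv]

lemma wordInv_wordInv (w : List (Letter n)) : wordInv (wordInv w) = w := by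
  simp [wordInv, List.map_reverse, List.map_map, Function.comp_def, bar_bar]

lemma length_wordInv (w : List (Letter n)) : (wordInv w).length = w.length := by
  simp [wordInv]

/-- Cyclic access to a list: `cg y U p = U[(p % len U)]`, with default `y`. -/
def cg (y : Letter n) (U : List (Letter n)) (p : ℕ) : Letter n :=
  U.getD (p % U.length) y

lemma cg_congr {y : Letter n} {U : List (Letter n)} {p q : ℕ}
    (h : p % U.length = q % U.length) : cg y U p = cg y U q := by
  simp [cg, h]

lemma cg_add_length {y : Letter n} {U : List (Letter n)} {p : ℕ} :
    cg y U (p + U.length) = cg y U p :=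
  cg_congr (Nat.add_mod_right _ _)

lemma cg_add_mul {y : Letter n} {U : List (Letter n)} {p : ℕ} (t : ℕ) :
    cg y U (p + U.length * t) = cg y U p := by
  induction t with
  | zero => simp
  | succ t ih =>
    rw [show p + U.length * (t+1) = (p + U.length * t) + U.length by ring,
      cg_add_length, ih]

lemma cg_add_mod {y : Letter n} {U : List (Letter n)} {a b : ℕ} :
    cg y U (a + b % U.length) = cg y U (a + b) :=
  cg_congr (Nat.add_mod_mod _ _ _)

lemma cg_mod_add {y : Letter n} {U : List (Letter n)} {a b : ℕ} :
    cg y U (a % U.length + b) = cg y U (a + b) :=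
  cg_congr (by rw [Nat.mod_add_mod])

lemma cg_rotate {y : Letter n} {U : List (Letter n)} (t q : ℕ) :
    cg y (U.rotate t) q = cg y U (q + t) := by
  rcases eq_or_ne U [] with rfl | hU
  · simp [cg]
  · have hm : 0 < U.length := List.length_pos_iff.mpr hU
    have h1 : q % U.length < (U.rotate t).length := by
      rw [List.length_rotate]; exact Nat.mod_lt _ hm
    have h2 : (q % U.length + t) % U.length = (q + t) % U.length := Nat.mod_add_mod _ _ _
    unfold cg
    rw [List.length_rotate, List.getD_eq_getElem _ _ h1,
      List.getD_eq_getElem _ _ (Nat.mod_lt (q+t) hm)]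
    simp only [List.getElem_rotate]
    simp [h2]

open Classical in
/-- Length of the maximal run of `y`'s cyclically following position `p`. -/
noncomputable def runlen (y : Letter n) (U : List (Letter n)) (p : ℕ) : ℕ :=
  if h : ∃ j, cg y U (p+1+j) ≠ y then Nat.find h else 0

lemma runlen_spec1 {y : Letter n} {U : List (Letter n)} {p : ℕ} :
    ∀ j < runlen y U p, cg y U (p+1+j) = y := by
  intro j hj
  rw [runlen] at hj
  split_ifs at hj with h
  · have := Nat.find_min h hj
    simpa using this
  · omega

lemma runlen_spec2 {y : Letter n} {U : List (Letter n)} {p : ℕ}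
    (h : ∃ j, cg y U (p+1+j) ≠ y) : cg y U (p+1+runlen y U p) ≠ y := by
  rw [runlen, dif_pos h]
  exact Nat.find_spec h

lemma runlen_eq {y : Letter n} {U : List (Letter n)} {p t : ℕ}
    (h1 : ∀ j < t, cg y U (p+1+j) = y) (h2 : cg y U (p+1+t) ≠ y) :
    runlen y U p = t := by
  rw [runlen, dif_pos ⟨t, h2⟩, Nat.find_eq_iff]
  exact ⟨h2, fun j hj hc => hc (h1 j hj)⟩

lemma runlen_congr {y : Letter n} {U U' : List (Letter n)} {p q : ℕ}
    (h : ∀ j, cg y U (p+1+j) = cg y U' (q+1+j)) :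
    runlen y U p = runlen y U' q := by
  rcases Classical.em (∃ j, cg y U' (q+1+j) ≠ y) with he | he
  · refine runlen_eq (fun j hj => ?_) ?_
    · rw [h]
      exact runlen_spec1 j hj
    · rw [h]
      exact runlen_spec2 he
  · have h0 : runlen y U' q = 0 := by
      rw [runlen, dif_neg he]
    push_neg at he
    rw [h0, runlen, dif_neg]
    push_neg
    intro j
    rw [h]
    exact he j

lemma exists_cg_ne {y : Letter n} {V : List (Letter n)} {p₀ : ℕ}
    (h : cg y V p₀ ≠ y) (q : ℕ) : ∃ j, cg y V (q+1+j) ≠ y := by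
  have hV : V ≠ [] := by
    rintro rfl
    exact h (by simp [cg])
  have hm : 0 < V.length := List.length_pos_iff.mpr hV
  set m := V.length with hmdef
  refine ⟨p₀ + m - (q+1) % m, ?_⟩
  have hmod := Nat.mod_add_div (q+1) m
  have hlt : (q+1) % m < m := Nat.mod_lt _ hm
  have hmul : m * ((q+1)/m + 1) = m * ((q+1)/m) + m := by ring
  rw [show q+1+(p₀ + m - (q+1) % m) = p₀ + m * ((q+1)/m + 1) by omega, cg_add_mul]
  exact h

/-- The contribution of position `p` to the multiset of maximal `y`-runs. -/
noncomputable def contrib (y : Letter n) (U : List (Letter n)) (p : ℕ) :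
    Multiset (Letter n × ℕ × Letter n) :=
  if cg y U p = y then 0
  else {(cg y U p, runlen y U p, cg y U (p + runlen y U p + 1))}

/-- The multiset of maximal `y`-runs of the cyclic word `U`, with flanking
letters. -/
noncomputable def runMS (y : Letter n) (U : List (Letter n)) :
    Multiset (Letter n × ℕ × Letter n) :=
  ∑ p ∈ Finset.range U.length, contrib y U p

lemma contrib_congr {y : Letter n} {U U' : List (Letter n)} {p q : ℕ}
    (h : ∀ j, cg y U (p+j) = cg y U' (q+j)) : contrib y U p = contrib y U' q := by
  have h0 : cg y U p = cg y U' q := by simpa using h 0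
  have hr : runlen y U p = runlen y U' q := runlen_congr (fun j => by
    have := h (1+j)
    rw [show p+(1+j) = p+1+j by omega, show q+(1+j) = q+1+j by omega] at this
    exact this)
  have hend : cg y U (p + runlen y U' q + 1) = cg y U' (q + runlen y U' q + 1) := by
    have := h (runlen y U' q + 1)
    rw [show p+(runlen y U' q+1) = p+runlen y U' q+1 by omega,
      show q+(runlen y U' q+1) = q+runlen y U' q+1 by omega] at this
    exact this
  unfold contrib
  rw [h0, hr, hend]

lemma contrib_add_length {y : Letter n} {U : List (Letter n)} {p : ℕ} :
    contrib y U (p + U.length) = contrib y U p :=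
  contrib_congr fun j => by
    rw [show p + U.length + j = (p+j) + U.length by omega, cg_add_length]

lemma contrib_rotate {y : Letter n} {U : List (Letter n)} {t p : ℕ} :
    contrib y (U.rotate t) p = contrib y U (t + p) :=
  contrib_congr fun j => by
    rw [cg_rotate]
    exact cg_congr (by rw [show p + j + t = t + p + j by omega])

lemma sum_shift_one {M : Type*} [AddCancelCommMonoid M] (m : ℕ) (g : ℕ → M)
    (hper : ∀ p, g (p + m) = g p) :
    ∑ p ∈ Finset.range m, g (p+1) = ∑ p ∈ Finset.range m, g p := by
  have h2 := Finset.sum_range_succ' g m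
  rw [Finset.sum_range_succ g m] at h2
  have h3 : g m = g 0 := by simpa using hper 0
  rw [h3] at h2
  exact (add_right_cancel h2).symm

lemma sum_shift {M : Type*} [AddCancelCommMonoid M] (m : ℕ) (g : ℕ → M)
    (hper : ∀ p, g (p + m) = g p) (t : ℕ) :
    ∑ p ∈ Finset.range m, g (t + p) = ∑ p ∈ Finset.range m, g p := by
  induction t with
  | zero => simp
  | succ t ih =>
    have hper' : ∀ p, g (t + (p + m)) = g (t + p) := fun p => by
      rw [show t + (p+m) = (t+p)+m by omega, hper]
    calc ∑ p ∈ Finset.range m, g (t+1+p)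
        = ∑ p ∈ Finset.range m, g (t + (p+1)) := by
          refine Finset.sum_congr rfl fun p _ => ?_
          rw [show t+1+p = t+(p+1) by omega]
      _ = ∑ p ∈ Finset.range m, g (t + p) := sum_shift_one m (fun p => g (t+p)) hper'
      _ = _ := ih

lemma sum_range_add' {M : Type*} [AddCommMonoid M] (g : ℕ → M) (a b : ℕ) :
    ∑ p ∈ Finset.range (a+b), g p
      = (∑ p ∈ Finset.range a, g p) + ∑ j ∈ Finset.range b, g (a+j) := by
  induction b with
  | zero => simp
  | succ b ih =>
    rw [show a + (b+1) = (a+b)+1 by omega, Finset.sum_range_succ, ih,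
      Finset.sum_range_succ, add_assoc]

lemma runMS_rotate (y : Letter n) (U : List (Letter n)) (t : ℕ) :
    runMS y (U.rotate t) = runMS y U := by
  unfold runMS
  rw [List.length_rotate]
  calc ∑ p ∈ Finset.range U.length, contrib y (U.rotate t) p
      = ∑ p ∈ Finset.range U.length, contrib y U (t+p) :=
        Finset.sum_congr rfl fun p _ => contrib_rotate
    _ = _ := sum_shift _ _ (fun p => contrib_add_length) t

lemma runMS_isRotated {y : Letter n} {U U' : List (Letter n)} (h : U ~r U') :
    runMS y U = runMS y U' := by
  obtain ⟨t, rfl⟩ := h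
  exact (runMS_rotate y U t).symm

/-- Key computation: if `V` has a maximal `y`-run of length `k` (flanked by
non-`y` letters at positions `p₀` and `p₀+k+1`), and `G` is the cyclic word
obtained from `V` by replacing this run by a `y`-run of length `k'`, then the
run multiset of `G` is that of `V` with the triple `(u₁,k,u₂)` replaced by
`(u₁,k',u₂)`. -/
lemma gen {y : Letter n} {V G : List (Letter n)} {p₀ k k' : ℕ}
    (hk : k < V.length)
    (hu₁ : cg y V p₀ ≠ y)
    (hrun : ∀ j, 1 ≤ j → j ≤ k → cg y V (p₀+j) = y)
    (hu₂ : cg y V (p₀+k+1) ≠ y)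
    (hGl : G.length = V.length - k + k')
    (hG1 : ∀ q < V.length - k, cg y G q = cg y V (p₀+k+1+q))
    (hG2 : ∀ j, 1 ≤ j → j ≤ k' → cg y G (V.length - k - 1 + j) = y) :
    runMS y G + {(cg y V p₀, k, cg y V (p₀+k+1))}
      = runMS y V + {(cg y V p₀, k', cg y V (p₀+k+1))} := by
  set m := V.length with hmdef
  set L := m - k with hLdef
  have hL1 : 1 ≤ L := by omega
  have hexV : ∀ q, ∃ j, cg y V (q+1+j) ≠ y := fun q => exists_cg_ne hu₁ q
  have hper : ∀ a b : ℕ, a = b + m → cg y V a = cg y V b := fun a b hab => by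
    rw [hab]; exact cg_add_length
  -- contribution of V at p₀
  have hrV : runlen y V p₀ = k := by
    refine runlen_eq (fun j hj => ?_) (by rwa [show p₀+1+k = p₀+k+1 by omega])
    have := hrun (j+1) (by omega) (by omega)
    rwa [show p₀+(j+1) = p₀+1+j by omega] at this
  have hcV : contrib y V p₀ = {(cg y V p₀, k, cg y V (p₀+k+1))} := by
    rw [contrib, if_neg hu₁, hrV]
  -- facts about G
  have hGu₁ : cg y G (L-1) = cg y V p₀ := by
    rw [hG1 (L-1) (by omega)]
    exact hper _ _ (by omega)
  have hG0 : cg y G 0 = cg y V (p₀+k+1) := by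
    simpa using hG1 0 (by omega)
  have hGL : cg y G (L + k') = cg y V (p₀+k+1) := by
    have h1 : cg y G (0 + G.length) = cg y G 0 := cg_add_length
    rw [show L + k' = 0 + G.length by omega, h1, hG0]
  have hrG : runlen y G (L-1) = k' := by
    refine runlen_eq (fun j hj => ?_) ?_
    · have := hG2 (j+1) (by omega) (by omega)
      rwa [show L - 1 + (j+1) = (L-1)+1+j by omega] at this
    · rw [show (L-1)+1+k' = L + k' by omega, hGL]
      exact hu₂
  have hcG : contrib y G (L-1) = {(cg y V p₀, k', cg y V (p₀+k+1))} := by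
    rw [contrib, if_neg (by rw [hGu₁]; exact hu₁), hGu₁, hrG,
      show (L-1) + k' + 1 = L + k' by omega, hGL]
  -- middle contributions agree
  have hmid : ∀ p < L-1, contrib y G p = contrib y V (p₀+k+1+p) := by
    intro p hp
    by_cases hy : cg y G p = y
    · rw [contrib, if_pos hy, contrib, if_pos (by rw [← hG1 p (by omega)]; exact hy)]
    · have hGp : cg y G p = cg y V (p₀+k+1+p) := hG1 p (by omega)
      set r := runlen y V (p₀+k+1+p) with hrdef
      have hspec2 : cg y V (p₀+k+1+p+1+r) ≠ y := runlen_spec2 (hexV _)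
      have hsmall : p + 1 + r ≤ L - 1 := by
        by_contra hbig
        have hj : L - 2 - p < r := by omega
        have hsp := runlen_spec1 (L-2-p) hj
        have h2 : cg y V (p₀ + m) = y := by
          rwa [show p₀+k+1+p+1+(L-2-p) = p₀ + m by omega] at hsp
        exact hu₁ (by rw [← hper (p₀+m) p₀ (by omega)]; exact h2)
      have hrG2 : runlen y G p = r := by
        refine runlen_eq (fun j hj => ?_) ?_
        · rw [hG1 (p+1+j) (by omega), show p₀+k+1+(p+1+j) = p₀+k+1+p+1+j by omega]
          exact runlen_spec1 j hj
        · rw [hG1 (p+1+r) (by omega), show p₀+k+1+(p+1+r) = p₀+k+1+p+1+r by omega]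
          exact hspec2
      have hend : cg y G (p + r + 1) = cg y V (p₀+k+1+p + r + 1) := by
        rw [hG1 (p+r+1) (by omega), show p₀+k+1+(p+r+1) = p₀+k+1+p+r+1 by omega]
      rw [contrib, contrib, if_neg hy, if_neg (by rw [← hGp]; exact hy), hGp, hrG2,
        ← hrdef, hend]
  -- assembling runMS G
  have hMG : runMS y G = (∑ p ∈ Finset.range (L-1), contrib y V (p₀+k+1+p))
      + {(cg y V p₀, k', cg y V (p₀+k+1))} := by
    rw [runMS, hGl, show m - k + k' = (L-1) + (k'+1) by omega, sum_range_add']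
    congr 1
    · exact Finset.sum_congr rfl fun p hp => hmid p (Finset.mem_range.mp hp)
    · rw [Finset.sum_range_succ']
      have hz : ∀ j ∈ Finset.range k', contrib y G ((L-1)+(j+1)) = 0 := by
        intro j hj
        rw [contrib, if_pos]
        have := hG2 (j+1) (by omega) (by simpa using Finset.mem_range.mp hj)
        rwa [show L - 1 + (j+1) = (L-1)+(j+1) by omega] at this
      rw [Finset.sum_congr rfl hz, Finset.sum_const, smul_zero, zero_add]
      simpa using hcG
  -- assembling runMS V
  have hMV : runMS y V = (∑ p ∈ Finset.range (L-1), contrib y V (p₀+k+1+p))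
      + {(cg y V p₀, k, cg y V (p₀+k+1))} := by
    have hshift : (∑ p ∈ Finset.range m, contrib y V (p₀+k+1+p))
        = ∑ p ∈ Finset.range m, contrib y V p :=
      sum_shift m (contrib y V) (fun p => contrib_add_length) (p₀+k+1)
    rw [runMS, ← hshift, show m = (L-1) + (k+1) by omega, sum_range_add']
    congr 1
    · rw [Finset.sum_range_succ']
      have hz : ∀ j ∈ Finset.range k, contrib y V (p₀+k+1+((L-1)+(j+1))) = 0 := by
        intro j hj
        have he : p₀+k+1+((L-1)+(j+1)) = (p₀+(j+1)) + m := by omega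
        rw [he]
        have : contrib y V ((p₀+(j+1)) + m) = contrib y V (p₀+(j+1)) :=
          contrib_add_length
        rw [this, contrib, if_pos (hrun (j+1) (by omega)
          (by have := Finset.mem_range.mp hj; omega))]
      rw [Finset.sum_congr rfl hz, Finset.sum_const, smul_zero, zero_add]
      have he : p₀+k+1+((L-1)+0) = p₀ + m := by omega
      rw [he]
      have : contrib y V (p₀ + m) = contrib y V p₀ := contrib_add_length
      rw [this, hcV]
  rw [hMG, hMV, add_right_comm]

lemma flatten_replicate_length {α : Type*} (r : ℕ) (V : List α) :
    (List.replicate r V).flatten.length = r * V.length := by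
  induction r with
  | zero => simp
  | succ r ih =>
    rw [List.replicate_succ, List.flatten_cons, List.length_append, ih]
    ring

lemma flatten_replicate_getD {α : Type*} (d : α) (r : ℕ) (V : List α) (q : ℕ)
    (hq : q < r * V.length) :
    (List.replicate r V).flatten.getD q d = V.getD (q % V.length) d := by
  induction r generalizing q with
  | zero => omega
  | succ r ih =>
    have hm : 0 < V.length := by
      rcases Nat.eq_zero_or_pos V.length with h0 | h0
      · rw [h0] at hq; omega
      · exact h0
    rw [List.replicate_succ, List.flatten_cons]
    by_cases h : q < V.length
    · have hql : q < (V ++ (List.replicate r V).flatten).length := by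
        rw [List.length_append]; omega
      rw [List.getD_eq_getElem _ _ hql, List.getElem_append_left h,
        ← List.getD_eq_getElem _ d h, Nat.mod_eq_of_lt h]
    · have hm' : V.length ≤ q := le_of_not_gt h
      have hlen : (List.replicate r V).flatten.length = r * V.length :=
        flatten_replicate_length r V
      have hmul : (r+1) * V.length = V.length + r * V.length := by ring
      have hq2 : q < (V ++ (List.replicate r V).flatten).length := by
        rw [List.length_append, hlen]; omega
      rw [List.getD_eq_getElem _ _ hq2, List.getElem_append_right hm',
        ← List.getD_eq_getElem _ d (by rw [hlen]; omega), ih _ (by omega)]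
      congr 1
      conv_rhs => rw [← Nat.sub_add_cancel hm', Nat.add_mod_right]

lemma seg_length {V : List (Letter n)} (hV : V ≠ []) (i l : ℕ) :
    (segment V i l).length = l := by
  have hm : 0 < V.length := List.length_pos_iff.mpr hV
  have h1 : l ≤ (l+1) * V.length := by
    calc l ≤ l + 1 := Nat.le_succ l
    _ = (l+1) * 1 := by ring
    _ ≤ (l+1) * V.length := Nat.mul_le_mul_left _ hm
  rw [segment, List.length_take, List.length_rotate, flatten_replicate_length]
  omega

lemma seg_getD {V : List (Letter n)} (hV : V ≠ []) {i l jj : ℕ} (hj : jj < l)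
    (d : Letter n) :
    (segment V i l).getD jj d = V.getD ((i+jj) % V.length) d := by
  have hm : 0 < V.length := List.length_pos_iff.mpr hV
  have hlen : ((List.replicate (l+1) V).flatten).length = (l+1) * V.length :=
    flatten_replicate_length _ _
  have h1 : l ≤ (l+1) * V.length := by
    calc l ≤ l + 1 := Nat.le_succ l
    _ = (l+1) * 1 := by ring
    _ ≤ (l+1) * V.length := Nat.mul_le_mul_left _ hm
  have hjj : jj < (((List.replicate (l+1) V).flatten).rotate i).length := by
    rw [List.length_rotate, hlen]; omega
  have hjt : jj < (segment V i l).length := by rw [seg_length hV]; exact hj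
  rw [segment] at hjt ⊢
  have hpos : 0 < (l+1) * V.length := Nat.mul_pos (by omega) hm
  rw [List.getD_eq_getElem _ _ hjt, List.getElem_take, List.getElem_rotate,
    ← List.getD_eq_getElem _ d (Nat.mod_lt _ (by rw [hlen]; exact hpos)),
    flatten_replicate_getD d _ _ _ (by rw [hlen]; exact Nat.mod_lt _ hpos)]
  congr 1
  rw [hlen, Nat.mod_mod_of_dvd _ (dvd_mul_left V.length (l+1)), add_comm]

lemma seg_cg {V : List (Letter n)} (hV : V ≠ []) {i l jj : ℕ} (hj : jj < l)
    (y : Letter n) :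
    cg y (segment V i l) jj = cg y V (i+jj) := by
  have hlt : jj < (segment V i l).length := by rw [seg_length hV]; exact hj
  rw [cg, Nat.mod_eq_of_lt hlt, seg_getD hV hj, cg]

lemma seg_zero (V : List (Letter n)) (i : ℕ) : segment V i 0 = [] := by
  simp [segment]

lemma replicate_flatten_singleton {α : Type*} (r : ℕ) (a : α) :
    (List.replicate r [a]).flatten = List.replicate r a := by
  induction r with
  | zero => simp
  | succ r ih => rw [List.replicate_succ, List.flatten_cons, ih]; rfl

lemma seg_x (x : Letter n) (l : ℕ) : segment [x] 0 l = List.replicate l x := by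
  rw [segment, replicate_flatten_singleton, List.rotate_zero, List.take_replicate]
  congr 1
  omega

lemma pos_facts {V : List (Letter n)} (hVne : V ≠ []) {i lp k : ℕ}
    {y u₁ u₂ : Letter n}
    (hP : segment V i lp = u₁ :: (List.replicate k y ++ [u₂])) :
    cg y V i = u₁ ∧ (∀ j, 1 ≤ j → j ≤ k → cg y V (i+j) = y)
      ∧ cg y V (i+(k+1)) = u₂ ∧ lp = k + 2 := by
  have hlp : lp = k + 2 := by
    have := congrArg List.length hP
    rw [seg_length hVne] at this
    simpa using this
  have hcg : ∀ jj < k+2, cg y V (i+jj) = (u₁ :: (List.replicate k y ++ [u₂])).getD jj y := by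
    intro jj hjj
    have hjj' : jj < lp := by omega
    exact (seg_getD hVne hjj' y).symm.trans (by rw [hP])
  refine ⟨?_, ?_, ?_, hlp⟩
  · have := hcg 0 (by omega)
    simpa using this
  · intro j h1 h2
    have := hcg j (by omega)
    rw [this]
    obtain ⟨j', rfl⟩ : ∃ j', j = j' + 1 := ⟨j - 1, by omega⟩
    have hj' : j' < k := by omega
    rw [List.getD_cons_succ,
      List.getD_eq_getElem _ _ (by simp; omega),
      List.getElem_append_left (by simpa using hj')]
    simp
  · have := hcg (k+1) (by omega)
    rw [this, List.getD_cons_succ,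
      List.getD_eq_getElem _ _ (by simp),
      List.getElem_append_right (by simp)]
    simp

lemma k_lt {V : List (Letter n)} (hVne : V ≠ []) {y u₁ : Letter n} {i k : ℕ}
    (hc : cg y V i = u₁) (hu : u₁ ≠ y)
    (hr : ∀ j, 1 ≤ j → j ≤ k → cg y V (i+j) = y) : k < V.length := by
  by_contra h
  push_neg at h
  have hm : 1 ≤ V.length := List.length_pos_iff.mpr hVne
  have h2 := hr V.length hm h
  rw [cg_add_length, hc] at h2
  exact hu h2

lemma gamma_eval (V : List (Letter n)) (x : Letter n) (e : (ℕ×ℕ)×(ℕ×ℕ)) :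
    gammaLP V [x] e =
      (if 3 ≤ e.1.2 ∧ ((segment [x] e.2.1 e.2.2).drop 1).dropLast
          = wordInv (((segment V e.1.1 e.1.2).drop 1).dropLast) then
        segment V ((e.1.1 + 1 + (((segment V e.1.1 e.1.2).drop 1).dropLast).length) % V.length)
          ((V.length - (((segment V e.1.1 e.1.2).drop 1).dropLast).length % V.length) % V.length) ++
        segment [x] ((e.2.1 + 1 + (((segment V e.1.1 e.1.2).drop 1).dropLast).length) % 1)
          ((1 - (((segment V e.1.1 e.1.2).drop 1).dropLast).length % 1) % 1)
      else V.rotate ((e.1.1 + e.1.2 - 1) % V.length) ++ [x].rotate ((e.2.1 + e.2.2 - 1) % 1)) :=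
  rfl

lemma midP {k : ℕ} {y u₁ u₂ : Letter n} :
    ((u₁ :: (List.replicate k y ++ [u₂])).drop 1).dropLast = List.replicate k y := by
  simp [List.dropLast_concat]

lemma midQ {k : ℕ} {x : Letter n} :
    ((List.replicate (k+2) x).drop 1).dropLast = List.replicate k x := by
  rw [show k+2 = (k+1)+1 from rfl, List.replicate_succ, List.drop_succ_cons,
    List.drop_zero, List.replicate_succ', List.dropLast_concat]

lemma gamma_else {V : List (Letter n)} (hVne : V ≠ []) {x : Letter n}
    {e : (ℕ×ℕ)×(ℕ×ℕ)} {k : ℕ} {u₁ u₂ : Letter n}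
    (hP : segment V e.1.1 e.1.2 = u₁ :: (List.replicate k x ++ [u₂]))
    (hQ : segment [x] e.2.1 e.2.2 = List.replicate (k+2) x) :
    gammaLP V [x] e = V.rotate ((e.1.1 + k + 1) % V.length) ++ [x] := by
  have hlp : e.1.2 = k + 2 := (pos_facts hVne hP).2.2.2
  rw [gamma_eval, hP, hQ, midP, midQ, if_neg, Nat.mod_one, List.rotate_zero]
  · rw [show e.1.1 + e.1.2 - 1 = e.1.1 + k + 1 by omega]
  · rintro ⟨h3, hmid⟩
    rw [wordInv_replicate] at hmid
    rcases Nat.eq_zero_or_pos k with rfl | hk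
    · omega
    · obtain ⟨k', rfl⟩ : ∃ k', k = k' + 1 := ⟨k - 1, by omega⟩
      rw [List.replicate_succ, List.replicate_succ] at hmid
      have : x = bar x := by injection hmid
      exact bar_ne_self x this.symm

lemma gamma_if {V : List (Letter n)} (hVne : V ≠ []) {x : Letter n}
    {e : (ℕ×ℕ)×(ℕ×ℕ)} {k : ℕ} {u₁ u₂ : Letter n}
    (hk1 : 1 ≤ k) (hkm : k < V.length)
    (hP : segment V e.1.1 e.1.2 = u₁ :: (List.replicate k (bar x) ++ [u₂]))
    (hQ : segment [x] e.2.1 e.2.2 = List.replicate (k+2) x) :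
    gammaLP V [x] e = segment V ((e.1.1 + k + 1) % V.length) (V.length - k) := by
  have hlp : e.1.2 = k + 2 := (pos_facts hVne hP).2.2.2
  rw [gamma_eval, hP, hQ, midP, midQ, if_pos]
  · rw [List.length_replicate, Nat.mod_one, Nat.mod_one, seg_zero, List.append_nil,
      Nat.mod_eq_of_lt hkm, Nat.mod_eq_of_lt (show V.length - k < V.length by omega),
      show e.1.1 + 1 + k = e.1.1 + k + 1 by omega]
  · exact ⟨by omega, by rw [wordInv_replicate, bar_bar]⟩

lemma orient_nodup {O : List (Letter n)} {w : List (Letter n)}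
    (h : orient O w ≠ 0) : w.Nodup := by
  rw [orient] at h
  split_ifs at h with h1 h2
  · exact h1.1
  · exact h2.1
  · exact absurd rfl h

lemma shape (O V : List (Letter n)) (x : Letter n) (hVne : V ≠ [])
    (e : (ℕ × ℕ) × (ℕ × ℕ)) (he : e ∈ LP2 O V [x]) :
    ∃ (b : Bool) (k : ℕ) (u₁ u₂ : Letter n),
      (b = false → 1 ≤ k) ∧ k < V.length ∧
      segment V e.1.1 e.1.2 = u₁ :: (List.replicate k (cond b x (bar x)) ++ [u₂]) ∧
      segment [x] e.2.1 e.2.2 = List.replicate (k+2) x ∧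
      u₁ ≠ cond b x (bar x) ∧ u₂ ≠ cond b x (bar x) ∧
      gammaLP V [x] e = (if b then V.rotate ((e.1.1+k+1) % V.length) ++ [x]
        else segment V ((e.1.1+k+1) % V.length) (V.length - k)) := by
  obtain ⟨hi, hj, hLP⟩ := he
  have hj0 : e.2.1 = 0 := by simpa using hj
  have hQrep : segment [x] e.2.1 e.2.2 = List.replicate e.2.2 x := by
    rw [hj0, seg_x]
  rcases hLP with ⟨p₁,p₂,q₁,q₂,hP,hQ,hL⟩ | ⟨p₁,p₂,q₁,q₂,x₁,x₂,Y,hP,hQ,hL⟩ |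
    ⟨p₁,p₂,q₁,q₂,x₁,x₂,Y,hP,hQ,hL⟩
  · -- case (1)
    have hlq : e.2.2 = 2 := by
      have := congrArg List.length (hQrep.symm.trans hQ)
      simpa using this
    have h2 : List.replicate 2 x = [q₁,q₂] := by rw [← hlq, ← hQrep, hQ]
    have hq₁ : q₁ = x := by
      have := congrArg (fun l => l.getD 0 x) h2
      simpa using this.symm
    have hq₂ : q₂ = x := by
      have := congrArg (fun l => l.getD 1 x) h2
      simpa using this.symm
    have hnd : List.Nodup [bar p₁, bar q₁, p₂, q₂] := orient_nodup hL.2.2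
    rw [hq₁, hq₂] at hnd
    have hp₁ : p₁ ≠ x := by
      intro h
      subst h
      simp at hnd
    have hp₂ : p₂ ≠ x := by
      intro h
      subst h
      simp at hnd
    have hP' : segment V e.1.1 e.1.2 = p₁ :: (List.replicate 0 x ++ [p₂]) := by
      simpa using hP
    refine ⟨true, 0, p₁, p₂, by simp, List.length_pos_iff.mpr hVne, hP', ?_, hp₁, hp₂, ?_⟩
    · rw [hQrep, hlq]
    · simpa using gamma_else hVne hP' (by rw [hQrep, hlq])
  · -- case (2)
    obtain ⟨hYne, hx₁, hx₂, hpq₁, hpq₂, hrP, hrQ, hor⟩ := hL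
    have h2 : q₁ :: (Y ++ [q₂]) = List.replicate e.2.2 x := hQ.symm.trans hQrep
    have hqmem : ∀ c ∈ q₁ :: (Y ++ [q₂]), c = x := (List.eq_replicate_iff.mp h2).2
    have hq₁ : q₁ = x := hqmem _ (by simp)
    have hq₂ : q₂ = x := hqmem _ (by simp)
    obtain ⟨k, rfl⟩ : ∃ k, Y = List.replicate k x :=
      ⟨Y.length, List.eq_replicate_iff.mpr ⟨rfl, fun c hc => hqmem _ (by simp [hc])⟩⟩
    have hlq : e.2.2 = k + 2 := by
      have := congrArg List.length h2
      simp at this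
      omega
    obtain ⟨hc1, hr1, hc2, hlp⟩ := pos_facts hVne hP
    have hp₁ : p₁ ≠ x := by rw [← hq₁]; exact hpq₁
    have hp₂ : p₂ ≠ x := by rw [← hq₂]; exact hpq₂
    have hkm : k < V.length := k_lt hVne hc1 hp₁ hr1
    refine ⟨true, k, p₁, p₂, by simp, hkm, hP, ?_, hp₁, hp₂, ?_⟩
    · rw [hQrep, hlq]
    · simpa using gamma_else hVne hP (by rw [hQrep, hlq])
  · -- case (3)
    obtain ⟨hYne, hx₁, hx₂, hpq₁, hpq₂, hrP, hrQ, hor⟩ := hL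
    have h2 : q₁ :: (wordInv Y ++ [q₂]) = List.replicate e.2.2 x := hQ.symm.trans hQrep
    have hqmem : ∀ c ∈ q₁ :: (wordInv Y ++ [q₂]), c = x := (List.eq_replicate_iff.mp h2).2
    have hq₁ : q₁ = x := hqmem _ (by simp)
    have hq₂ : q₂ = x := hqmem _ (by simp)
    set k := Y.length with hkdef
    have hwY : wordInv Y = List.replicate k x :=
      List.eq_replicate_iff.mpr ⟨length_wordInv Y,
        fun c hc => hqmem _ (by simp [hc])⟩
    have hY : Y = List.replicate k (bar x) := by
      have := congrArg wordInv hwY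
      rwa [wordInv_wordInv, wordInv_replicate] at this
    have hk1 : 1 ≤ k := by
      rw [hkdef]
      exact List.length_pos_iff.mpr hYne
    have hlq : e.2.2 = k + 2 := by
      have := congrArg List.length h2
      simp [length_wordInv] at this
      omega
    have hP' : segment V e.1.1 e.1.2 = p₁ :: (List.replicate k (bar x) ++ [p₂]) := by
      rw [hP, hY]
    obtain ⟨hc1, hr1, hc2, hlp⟩ := pos_facts hVne hP'
    have hp₁ : p₁ ≠ bar x := by rw [← hq₂]; exact hpq₁
    have hp₂ : p₂ ≠ bar x := by rw [← hq₁]; exact hpq₂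
    have hkm : k < V.length := k_lt hVne hc1 hp₁ hr1
    refine ⟨false, k, p₁, p₂, fun _ => hk1, hkm, hP', ?_, hp₁, hp₂, ?_⟩
    · rw [hQrep, hlq]
    · simpa using gamma_if hVne hk1 hkm hP' (by rw [hQrep, hlq])

lemma gen_applied {V : List (Letter n)} (hVne : V ≠ []) (x : Letter n)
    {e : (ℕ×ℕ)×(ℕ×ℕ)} {b : Bool} {k : ℕ} {u₁ u₂ : Letter n}
    (hb : b = false → 1 ≤ k) (hk : k < V.length)
    (hP : segment V e.1.1 e.1.2 = u₁ :: (List.replicate k (cond b x (bar x)) ++ [u₂]))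
    (hu₁ : u₁ ≠ cond b x (bar x)) (hu₂ : u₂ ≠ cond b x (bar x))
    (hγ : gammaLP V [x] e = (if b then V.rotate ((e.1.1+k+1) % V.length) ++ [x]
        else segment V ((e.1.1+k+1) % V.length) (V.length - k))) :
    runMS (cond b x (bar x)) (gammaLP V [x] e) + {(u₁, k, u₂)}
      = runMS (cond b x (bar x)) V + {(u₁, cond b (k+1) 0, u₂)} := by
  obtain ⟨hc1, hr1, hc2, hlp⟩ := pos_facts hVne hP
  have hc2' : cg (cond b x (bar x)) V (e.1.1+k+1) = u₂ := by
    rw [show e.1.1+k+1 = e.1.1+(k+1) by omega]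
    exact hc2
  cases b
  · -- deletion case
    simp only [cond] at hc1 hr1 hc2' hu₁ hu₂ ⊢
    simp only [if_false, Bool.false_eq_true] at hγ
    set y := bar x with hy
    set m := V.length with hm
    set i := e.1.1 with hi
    set G := segment V ((i+k+1) % m) (m-k) with hG
    have hGl : G.length = m - k + 0 := by
      rw [hG, seg_length hVne]
      omega
    have hG1 : ∀ q < m - k, cg y G q = cg y V (i+k+1+q) := by
      intro q hq
      rw [hG, seg_cg hVne hq, cg_mod_add]
    have hG2 : ∀ j, 1 ≤ j → j ≤ 0 → cg y G (m - k - 1 + j) = y := by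
      intro j h1 h0
      omega
    have := gen hk (by rw [hc1]; exact hu₁) hr1 (by rw [hc2']; exact hu₂) hGl hG1 hG2
    rw [hc1, hc2'] at this
    rw [hγ]
    exact this
  · -- insertion case
    simp only [cond] at hc1 hr1 hc2' hu₁ hu₂ ⊢
    simp only [if_true] at hγ
    set m := V.length with hm
    set i := e.1.1 with hi
    set G := V.rotate ((i+k+1) % m) ++ [x] with hG
    have hGlen : G.length = m + 1 := by
      rw [hG]
      simp
      exact hm.symm
    have hGl : G.length = m - k + (k+1) := by
      rw [hGlen]
      omega
    have hGq : ∀ q < m, cg x G q = cg x V (i+k+1+q) := by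
      intro q hq
      have hqr : q < (V.rotate ((i+k+1) % m)).length := by
        rw [List.length_rotate]
        exact hq
      rw [cg, Nat.mod_eq_of_lt (by rw [hGlen]; omega), hG,
        List.getD_append _ _ _ _ hqr]
      have h3 : (V.rotate ((i+k+1) % m)).getD q x = cg x (V.rotate ((i+k+1) % m)) q := by
        rw [cg, List.length_rotate, Nat.mod_eq_of_lt hq]
      rw [h3, cg_rotate, cg_add_mod]
      exact cg_congr (by rw [Nat.add_comm])
    have hGm : cg x G m = x := by
      rw [cg, Nat.mod_eq_of_lt (by rw [hGlen]; omega), hG,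
        List.getD_append_right _ _ _ _ (by rw [List.length_rotate])]
      simp [List.length_rotate]
    have hG1 : ∀ q < m - k, cg x G q = cg x V (i+k+1+q) := fun q hq => hGq q (by omega)
    have hG2 : ∀ j, 1 ≤ j → j ≤ k+1 → cg x G (m - k - 1 + j) = x := by
      intro j h1 h2
      rcases eq_or_lt_of_le h2 with rfl | hlt
      · rw [show m - k - 1 + (k+1) = m by omega]
        exact hGm
      · have hidx : m - k - 1 + j < m := by omega
        rw [hGq _ hidx, show i+k+1+(m-k-1+j) = (i+j) + m by omega, cg_add_length]
        exact hr1 j h1 (by omega)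
    have := gen hk (by rw [hc1]; exact hu₁) hr1 (by rw [hc2']; exact hu₂) hGl hG1 hG2
    rw [hc1, hc2'] at this
    rw [hγ]
    exact this

end Aux

/-- Lemma 5.1: let `V` be a reduced cyclic word and `x` a
letter.  If two linked pairs in `LP₂(V, c(x))` have the same glued cyclic word
`γ`, then they are the same pair. -/
theorem gamma_injective_on_LP2_with_letter {n : ℕ} (O V : List (Letter n))
    (x : Letter n) (hO : SurfaceSymbol O) (hV : CyclicallyReduced V)
    (e₁ e₂ : (ℕ × ℕ) × (ℕ × ℕ))
    (h₁ : e₁ ∈ LP2 O V [x]) (h₂ : e₂ ∈ LP2 O V [x])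
    (hγ : gammaLP V [x] e₁ ~r gammaLP V [x] e₂) :
    segment V e₁.1.1 e₁.1.2 = segment V e₂.1.1 e₂.1.2 ∧
      segment [x] e₁.2.1 e₁.2.2 = segment [x] e₂.2.1 e₂.2.2 := by
  obtain ⟨hVne, -⟩ := hV
  obtain ⟨b₁, k₁, u₁, u₂, hb₁, hk₁, hP₁, hQ₁, hu₁, hu₂, hγ₁⟩ := shape O V x hVne e₁ h₁
  obtain ⟨b₂, k₂, v₁, v₂, hb₂, hk₂, hP₂, hQ₂, hv₁, hv₂, hγ₂⟩ := shape O V x hVne e₂ h₂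
  have hm : 0 < V.length := List.length_pos_iff.mpr hVne
  have hlen : (gammaLP V [x] e₁).length = (gammaLP V [x] e₂).length := by
    obtain ⟨t, ht⟩ := hγ
    rw [← ht, List.length_rotate]
  have hbb : b₁ = b₂ := by
    rw [hγ₁, hγ₂] at hlen
    cases b₁ <;> cases b₂
    · rfl
    · exfalso
      rw [if_neg (by simp), if_pos rfl, seg_length hVne] at hlen
      simp at hlen
      have := hb₁ rfl
      omega
    · exfalso
      rw [if_pos rfl, if_neg (by simp), seg_length hVne] at hlen
      simp at hlen
      have := hb₂ rfl
      omega
    · rfl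
  subst hbb
  have hgen₁ := gen_applied hVne x hb₁ hk₁ hP₁ hu₁ hu₂ hγ₁
  have hgen₂ := gen_applied hVne x hb₂ hk₂ hP₂ hv₁ hv₂ hγ₂
  have hMeq : runMS (cond b₁ x (bar x)) (gammaLP V [x] e₁)
      = runMS (cond b₁ x (bar x)) (gammaLP V [x] e₂) := runMS_isRotated hγ
  set y := cond b₁ x (bar x)
  set T₁ : Letter n × ℕ × Letter n := (u₁, k₁, u₂) with hT₁
  set T₂ : Letter n × ℕ × Letter n := (v₁, k₂, v₂) with hT₂
  set T₁' : Letter n × ℕ × Letter n := (u₁, cond b₁ (k₁+1) 0, u₂) with hT₁'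
  set T₂' : Letter n × ℕ × Letter n := (v₁, cond b₁ (k₂+1) 0, v₂) with hT₂'
  have key : ({T₁'} : Multiset (Letter n × ℕ × Letter n)) + {T₂}
      = {T₂'} + {T₁} := by
    have h1 : runMS y V + (({T₁'} : Multiset (Letter n × ℕ × Letter n)) + {T₂})
        = runMS y V + ({T₂'} + {T₁}) := by
      calc runMS y V + ({T₁'} + {T₂})
          = (runMS y V + {T₁'}) + {T₂} := (add_assoc _ _ _).symm
        _ = (runMS y (gammaLP V [x] e₁) + {T₁}) + {T₂} := by rw [hgen₁]
        _ = (runMS y (gammaLP V [x] e₁) + {T₂}) + {T₁} := add_right_comm _ _ _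
        _ = (runMS y (gammaLP V [x] e₂) + {T₂}) + {T₁} := by rw [hMeq]
        _ = (runMS y V + {T₂'}) + {T₁} := by rw [hgen₂]
        _ = runMS y V + ({T₂'} + {T₁}) := add_assoc _ _ _
    exact add_left_cancel h1
  have hTmem : T₁ ∈ ({T₁'} : Multiset (Letter n × ℕ × Letter n)) + {T₂} := by
    rw [key]
    simp
  have hT12 : T₁ = T₂ := by
    rcases Multiset.mem_add.mp hTmem with hT | hT
    · exfalso
      have h2 := Multiset.mem_singleton.mp hT
      have hk' := congrArg (fun t : Letter n × ℕ × Letter n => t.2.1) h2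
      rw [hT₁, hT₁'] at hk'
      simp at hk'
      cases b₁
      · simp at hk'
        have := hb₁ rfl
        omega
      · simp at hk'
    · exact Multiset.mem_singleton.mp hT
  simp only [hT₁, hT₂, Prod.mk.injEq] at hT12
  obtain ⟨he₁, he₂, he₃⟩ := hT12
  constructor
  · rw [hP₁, hP₂, he₁, he₂, he₃]
  · rw [hQ₁, hQ₂, he₂]

end ChasCW
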